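/- Let k be a field regarded with the discrete topology, and let K be a topological k-vector space (a topological additive group on which every scalar multiplication is continuous) with the property that for every open k-linear subspace V ⊆ K the quotient K/V is finite-dimensional over k. Let X be a k-vector space equipped with the discrete topology. Then the canonical linear map X ⊗_k K' → L(K, X), sending x ⊗ φ to the map v ↦ φ(v)·x, is bijective; here K' denotes the space of continuous linear functionals K → k and L(K, X) the space of continuous k-linear maps K → X. -/

import Mathlib

set_option synthInstance.maxHeartbeats 400000
set_option maxHeartbeats 1000000


open scoped TensorProduct

/-- A linear map into a module with the discrete topology is continuous iff its kernel
is open. -/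
theorem aux_cont_iff_ker_open {k K M : Type*} [Field k] [AddCommGroup K] [Module k K]
    [TopologicalSpace K] [IsTopologicalAddGroup K] [AddCommGroup M] [Module k M]
    (f : K →ₗ[k] M) :
    @Continuous K M _ ⊥ ⇑f ↔ IsOpen ((LinearMap.ker f : Submodule k K) : Set K) := by
  letI : TopologicalSpace M := ⊥
  haveI : DiscreteTopology M := ⟨rfl⟩
  constructor
  · intro h
    have h0 : IsOpen (f ⁻¹' {0}) := (isOpen_discrete _).preimage h
    have : (LinearMap.ker f : Set K) = f ⁻¹' {0} := by
      ext x; simp [LinearMap.mem_ker]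
    rw [this]; exact h0
  · intro h
    rw [continuous_discrete_rng]
    intro b
    rcases Set.eq_empty_or_nonempty (f ⁻¹' {b}) with he | ⟨v₀, hv₀⟩
    · rw [he]; exact isOpen_empty
    · have hv₀' : f v₀ = b := hv₀
      have : f ⁻¹' {b} = (fun x => x - v₀) ⁻¹' (LinearMap.ker f : Set K) := by
        ext x
        simp [LinearMap.mem_ker, map_sub, sub_eq_zero, hv₀']
      rw [this]
      exact h.preimage (continuous_id.sub continuous_const)

/-- A submodule containing an open submodule is open. -/
theorem aux_open_mono {k K : Type*} [Field k] [AddCommGroup K] [Module k K]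
    [TopologicalSpace K] [IsTopologicalAddGroup K] {V W : Submodule k K} (hVW : V ≤ W)
    (hV : IsOpen (V : Set K)) : IsOpen (W : Set K) := by
  have hrep : (W : Set K) = ⋃ w : W, (fun x => x - (w : K)) ⁻¹' (V : Set K) := by
    ext x
    constructor
    · intro hx
      exact Set.mem_iUnion.2 ⟨⟨x, hx⟩, by simp⟩
    · intro hx
      rcases Set.mem_iUnion.1 hx with ⟨w, hw⟩
      have hxw : x - (w : K) ∈ V := hw
      have := W.add_mem (hVW hxw) w.2
      simpa using this
  rw [hrep]
  exact isOpen_iUnion fun w => hV.preimage (continuous_id.sub continuous_const)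

/-- Let `k` be a discrete field, `K` a topological `k`-vector space
(a topological additive group with continuous scalar multiplications) such that `K/V` is
finite dimensional for every open linear subspace `V ⊆ K`, and let `X` be a discrete
`k`-vector space.  Let `K'` be the submodule of the dual consisting of the continuous
functionals (continuity w.r.t. the discrete topology `⊥` on `k`).  Then the canonical
linear map `X ⊗ K' → L(K, X)`, `x ⊗ φ ↦ (v ↦ φ(v) • x)`, is injective and its range is
exactly the set of continuous linear maps `K → X` (`X` discrete), i.e. it is a bijection
onto `L(K, X)`. -/
theorem tensor_with_dual_of_bounded (k : Type*) [Field k]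
    (K : Type*) [AddCommGroup K] [Module k K] [TopologicalSpace K] [IsTopologicalAddGroup K]
    (hsmul : ∀ c : k, Continuous fun x : K => c • x)
    (hbdd : ∀ V : Submodule k K, IsOpen (V : Set K) → FiniteDimensional k (K ⧸ V))
    (X : Type*) [AddCommGroup X] [Module k X]
    (K' : Submodule k (K →ₗ[k] k))
    (hK' : ∀ φ : K →ₗ[k] k, φ ∈ K' ↔ @Continuous K k _ ⊥ ⇑φ)
    (ev : (X ⊗[k] K') →ₗ[k] (K →ₗ[k] X))
    (hev : ∀ (x : X) (φ : K') (v : K), ev (x ⊗ₜ[k] φ) v = (φ : K →ₗ[k] k) v • x) :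
    Function.Injective ⇑ev ∧
      Set.range ⇑ev = {f : K →ₗ[k] X | @Continuous K X _ ⊥ ⇑f} := by
  classical
  constructor
  · -- injectivity
    let b := Module.Basis.ofVectorSpace k X
    let e : (X ⊗[k] K') ≃ₗ[k] (Module.Basis.ofVectorSpaceIndex k X →₀ K') :=
      (TensorProduct.congr (b.repr) (LinearEquiv.refl k K')).trans
        (TensorProduct.finsuppScalarLeft k K' _)
    have key : ∀ (t : X ⊗[k] K') (i : Module.Basis.ofVectorSpaceIndex k X) (v : K),
        ((e t i : K →ₗ[k] k)) v = b.repr (ev t v) i := by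
      intro t
      induction t using TensorProduct.induction_on with
      | zero => intro i v; simp
      | tmul x φ =>
        intro i v
        simp [e, TensorProduct.congr_tmul, TensorProduct.finsuppScalarLeft_apply_tmul_apply,
          hev, mul_comm]
      | add s t hs ht =>
        intro i v
        simp only [map_add, Finsupp.add_apply, Submodule.coe_add, LinearMap.add_apply,
          hs, ht]
    rw [injective_iff_map_eq_zero]
    intro t ht
    have het : e t = 0 := by
      ext i v
      rw [key t i v, ht]
      simp
    exact e.injective (het.trans (map_zero e).symm)
  · -- range
    ext f
    constructor
    · rintro ⟨t, rfl⟩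
      letI : TopologicalSpace X := ⊥
      letI : TopologicalSpace k := ⊥
      haveI : DiscreteTopology X := ⟨rfl⟩
      haveI : DiscreteTopology k := ⟨rfl⟩
      show Continuous ⇑(ev t)
      induction t using TensorProduct.induction_on with
      | zero =>
        rw [map_zero]
        have : ⇑(0 : K →ₗ[k] X) = fun _ : K => (0 : X) := rfl
        rw [this]
        exact continuous_const
      | tmul x φ =>
        have hφ : Continuous ⇑(φ : K →ₗ[k] k) := (hK' _).1 φ.2
        have hco : ⇑(ev (x ⊗ₜ[k] φ)) = (fun c : k => c • x) ∘ ⇑(φ : K →ₗ[k] k) :=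
          funext fun v => hev x φ v
        rw [hco]
        exact Continuous.comp (continuous_of_discreteTopology (f := fun c : k => c • x)) hφ
      | add s t hs ht =>
        have hco : ⇑(ev (s + t)) = fun v : K => ev s v + ev t v := by
          rw [map_add]; rfl
        rw [hco]
        exact (continuous_of_discreteTopology
          (f := fun p : X × X => p.1 + p.2)).comp (hs.prodMk ht)
    · intro hf
      have hker : IsOpen ((LinearMap.ker f : Submodule k K) : Set K) :=
        (aux_cont_iff_ker_open f).1 hf
      set V := LinearMap.ker f with hV
      haveI : FiniteDimensional k (K ⧸ V) := hbdd V hker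
      let g : (K ⧸ V) →ₗ[k] X := V.liftQ f le_rfl
      let B := Module.Free.chooseBasis k (K ⧸ V)
      let ψ : Module.Free.ChooseBasisIndex k (K ⧸ V) → (K →ₗ[k] k) :=
        fun i => (B.coord i).comp V.mkQ
      have hψmem : ∀ i, ψ i ∈ K' := by
        intro i
        refine (hK' _).2 ((aux_cont_iff_ker_open _).2 (aux_open_mono ?_ hker))
        intro x hx
        simp only [LinearMap.mem_ker, ψ, LinearMap.comp_apply]
        have : V.mkQ x = 0 := (Submodule.Quotient.mk_eq_zero V).2 hx
        rw [this, map_zero]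
      refine ⟨∑ i, g (B i) ⊗ₜ[k] (⟨ψ i, hψmem i⟩ : K'), ?_⟩
      ext v
      rw [map_sum, LinearMap.sum_apply]
      have h1 : ∀ i, ev (g (B i) ⊗ₜ[k] (⟨ψ i, hψmem i⟩ : K')) v
          = B.repr (V.mkQ v) i • g (B i) := by
        intro i
        rw [hev]
        congr 1
      calc ∑ i, ev (g (B i) ⊗ₜ[k] (⟨ψ i, hψmem i⟩ : K')) v
          = ∑ i, B.repr (V.mkQ v) i • g (B i) := by
            exact Finset.sum_congr rfl fun i _ => h1 i
        _ = g (∑ i, B.repr (V.mkQ v) i • B i) := by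
            rw [map_sum]; simp [map_smul]
        _ = g (V.mkQ v) := by rw [B.sum_repr]
        _ = f v := by simp [g]
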